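/- Define the entire function W₁ : ℂ → ℂ by W₁(λ) = cos(π√(λ² + 1/4)) (the value independent of the branch of the square root since cosine is even). Then W₁ is of sine-type, all its zeros are real, and its zero set is exactly {λ ∈ ℂ : λ² = k² + k for some k ∈ ℕ} = {±√(k² + k) : k ∈ ℕ}; in particular every zero λ satisfies λ² = 1·l with l = k² + k an integer, so W₁ is a generating function for attenuation at Fresnel number 𝔣 = 1. -/

import Mathlib

open MeasureTheory Complex Filter
open scoped FourierTransform Real Topology

noncomputable section

structure IsSineType (W : ℂ → ℂ) : Prop where
  entire : Differentiable ℂ W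
  separated : ∃ c > 0, ∀ lam ∈ {z : ℂ | W z = 0}, ∀ mu ∈ {z : ℂ | W z = 0},
      lam ≠ mu → c ≤ ‖lam - mu‖
  bounds : ∃ A > 0, ∃ B > 0, ∃ H > 0, ∀ lam : ℂ, H ≤ |lam.im| →
      B * Real.exp (π * |lam.im|) ≤ ‖W lam‖ ∧
      ‖W lam‖ ≤ A * Real.exp (π * |lam.im|)

/-- `W` is a generating function for attenuation at Fresnel number `f`:
of sine-type, all zeros real, and each zero satisfies `λ² = f·l` for some integer `l`. -/
structure IsGeneratingAtten (f : ℝ) (W : ℂ → ℂ) : Prop where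
  sineType : IsSineType W
  realZeros : ∀ z : ℂ, W z = 0 → ∃ x : ℝ, z = (x : ℂ)
  quantized : ∀ z : ℂ, W z = 0 → ∃ l : ℤ, z ^ 2 = (f : ℂ) * (l : ℂ)

namespace GenAttenOne

/-- `u z = z² + 1/4`. -/
def u (z : ℂ) : ℂ := z ^ 2 + 1 / 4

/-- principal square root of `u z`. -/
def s (z : ℂ) : ℂ := u z ^ ((1 : ℂ) / 2)

lemma sq_half (c : ℂ) : (c ^ ((1 : ℂ) / 2)) ^ 2 = c := by
  by_cases h : c = 0
  · rw [h, Complex.zero_cpow (by norm_num : (1 : ℂ) / 2 ≠ 0)]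
    norm_num
  · rw [sq, ← Complex.cpow_add _ _ h]
    norm_num

lemma sq_s (z : ℂ) : s z ^ 2 = z ^ 2 + 1 / 4 := sq_half _

/-- branch independence -/
lemma branch {z w : ℂ} (h : w ^ 2 = z ^ 2 + 1 / 4) :
    Complex.cos ((π : ℂ) * s z) = Complex.cos ((π : ℂ) * w) := by
  have h0 : (w - s z) * (w + s z) = 0 := by
    have hs := sq_s z
    have hfac : (w - s z) * (w + s z) = w ^ 2 - s z ^ 2 := by ring
    rw [hfac, h, hs, sub_self]
  rcases mul_eq_zero.1 h0 with h1 | h1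
  · obtain rfl : w = s z := sub_eq_zero.mp h1
    rfl
  · obtain rfl : w = -s z := eq_neg_of_add_eq_zero_left h1
    rw [mul_neg, Complex.cos_neg]

/-- the entire function -/
def W (z : ℂ) : ℂ := Complex.cos ((π : ℂ) * s z)

lemma W_eq {z w : ℂ} (h : w ^ 2 = z ^ 2 + 1 / 4) : W z = Complex.cos ((π : ℂ) * w) := branch h

lemma piC_ne : (π : ℂ) ≠ 0 := Complex.ofReal_ne_zero.2 Real.pi_ne_zero

/-- zero characterization -/
lemma zeros_iff (z : ℂ) : W z = 0 ↔ ∃ k : ℕ, z ^ 2 = (k : ℂ) ^ 2 + k := by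
  constructor
  · intro hz
    rw [W, Complex.cos_eq_zero_iff] at hz
    obtain ⟨k, hk⟩ := hz
    have hs : s z = (k : ℂ) + 1 / 2 := by
      field_simp at hk
      -- hk : π * s z * 2 = (2*k+1) * π  (some form)
      have := hk
      apply mul_left_cancel₀ piC_ne
      linear_combination ((π : ℂ) / 2) * hk
    have hz2 : z ^ 2 = (k : ℂ) ^ 2 + k := by
      have h2 := sq_s z
      rw [hs] at h2
      linear_combination -h2
    obtain ⟨m, hm⟩ : ∃ m : ℕ, (m : ℤ) ^ 2 + (m : ℤ) = k ^ 2 + k := by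
      rcases le_or_gt 0 k with hk0 | hk0
      · exact ⟨k.toNat, by rw [Int.toNat_of_nonneg hk0]⟩
      · refine ⟨(-1 - k).toNat, ?_⟩
        rw [Int.toNat_of_nonneg (by omega)]
        ring
    refine ⟨m, ?_⟩
    rw [hz2]
    have : ((m : ℤ) : ℂ) ^ 2 + ((m : ℤ) : ℂ) = ((k : ℤ) : ℂ) ^ 2 + ((k : ℤ) : ℂ) := by
      exact_mod_cast congrArg (fun n : ℤ => (n : ℂ)) hm
    push_cast at this ⊢
    exact this.symm
  · rintro ⟨k, hk⟩
    have hw : ((k : ℂ) + 1 / 2) ^ 2 = z ^ 2 + 1 / 4 := by linear_combination -hk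
    rw [W_eq hw, Complex.cos_eq_zero_iff]
    exact ⟨(k : ℤ), by push_cast; ring⟩


/-- `r k = √(k² + k)` -/
def r (k : ℕ) : ℝ := Real.sqrt ((k : ℝ) ^ 2 + k)

lemma r_nonneg (k : ℕ) : 0 ≤ r k := Real.sqrt_nonneg _

lemma r_sq (k : ℕ) : r k ^ 2 = (k : ℝ) ^ 2 + k := Real.sq_sqrt (by positivity)

lemma r_zero : r 0 = 0 := by simp [r]

lemma r_mono {j k : ℕ} (h : j ≤ k) : r j ≤ r k := by
  apply Real.sqrt_le_sqrt
  have : (j : ℝ) ≤ k := by exact_mod_cast h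
  nlinarith

lemma r_gap (k : ℕ) : r k + 1 ≤ r (k + 1) := by
  have h2 : r k ≤ (k : ℝ) + 1 / 2 := by
    rw [r, show (k : ℝ) ^ 2 + k = ((k : ℝ) + 1/2) ^ 2 - 1/4 by ring]
    calc Real.sqrt (((k : ℝ) + 1/2) ^ 2 - 1/4) ≤ Real.sqrt (((k : ℝ) + 1/2) ^ 2) :=
          Real.sqrt_le_sqrt (by linarith)
      _ = (k : ℝ) + 1/2 := Real.sqrt_sq (by positivity)
  have h3 : (r k + 1) ^ 2 ≤ (((k + 1 : ℕ)) : ℝ) ^ 2 + (((k + 1 : ℕ)) : ℝ) := by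
    push_cast
    nlinarith [r_sq k, r_nonneg k]
  exact (Real.le_sqrt (by linarith [r_nonneg k]) (by positivity)).mpr h3

lemma r_lt_gap {j k : ℕ} (h : j < k) : r j + 1 ≤ r k :=
  le_trans (r_gap j) (r_mono h)

lemma r_one_le {k : ℕ} (h : 1 ≤ k) : 1 ≤ r k := by
  have := r_lt_gap (show 0 < k from h)
  rw [r_zero] at this
  linarith

/-- real separation lemma -/
lemma sep_real {j k : ℕ} {x y : ℝ} (hx : x = r j ∨ x = -r j) (hy : y = r k ∨ y = -r k)
    (hxy : x ≠ y) : 1 ≤ |x - y| := by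
  have sep_pos : ∀ a b : ℕ, r a ≠ r b → 1 ≤ |r a - r b| := by
    intro a b hab
    rcases lt_trichotomy a b with h | h | h
    · rw [abs_sub_comm, _root_.abs_of_nonneg (by linarith [r_lt_gap h])]
      linarith [r_lt_gap h]
    · exact absurd (by rw [h]) hab
    · rw [_root_.abs_of_nonneg (by linarith [r_lt_gap h])]
      linarith [r_lt_gap h]
  have sep_sum : ∀ a b : ℕ, r a ≠ -r b → 1 ≤ |r a + r b| := by
    intro a b hab
    have h0 : ¬(a = 0 ∧ b = 0) := by
      rintro ⟨rfl, rfl⟩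
      exact hab (by rw [r_zero]; norm_num)
    have h1 : 1 ≤ r a ∨ 1 ≤ r b := by
      rcases Nat.eq_zero_or_pos a with ha | ha
      · rcases Nat.eq_zero_or_pos b with hb | hb
        · exact absurd ⟨ha, hb⟩ h0
        · exact Or.inr (r_one_le hb)
      · exact Or.inl (r_one_le ha)
    rw [_root_.abs_of_nonneg (by linarith [r_nonneg a, r_nonneg b])]
    rcases h1 with h1 | h1
    · linarith [r_nonneg b]
    · linarith [r_nonneg a]
  rcases hx with rfl | rfl <;> rcases hy with rfl | rfl
  · exact sep_pos j k hxy
  · have := sep_sum j k (by simpa using hxy)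
    rwa [sub_neg_eq_add]
  · rw [show -r j - r k = -(r k + r j) by ring, _root_.abs_neg]
    exact sep_sum k j (fun h => hxy (by linarith))
  · rw [show -r j - -r k = r k - r j by ring]
    exact sep_pos k j (fun h => hxy (by rw [h]))


lemma hasDerivAt_u (z : ℂ) : HasDerivAt u (2 * z) z := by
  have h : HasDerivAt (fun x : ℂ => x ^ 2 + 1 / 4) (2 * z) z := by
    simpa using (hasDerivAt_pow 2 z).add_const (1 / 4 : ℂ)
  exact h

lemma u_cont : Continuous u := by
  have : Differentiable ℂ u := fun z => (hasDerivAt_u z).differentiableAt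
  exact this.continuous

lemma diffAt_of_slit {z₀ : ℂ} (h : u z₀ ∈ Complex.slitPlane) : DifferentiableAt ℂ W z₀ := by
  have h1 := ((hasDerivAt_u z₀).cpow_const (c := (1 : ℂ) / 2) h).differentiableAt
  exact ((differentiableAt_const _).mul h1).ccos

lemma W_eq_V (z : ℂ) :
    W z = Complex.cos ((π : ℂ) * (Complex.I * ((-u z) ^ ((1 : ℂ) / 2)))) := by
  apply W_eq
  have hv : ((-u z) ^ ((1 : ℂ) / 2)) ^ 2 = -u z := sq_half _
  rw [mul_pow, Complex.I_sq, hv, u]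
  ring

lemma diffAt_of_neg {z₀ : ℂ} (h : -u z₀ ∈ Complex.slitPlane) : DifferentiableAt ℂ W z₀ := by
  have h1 := (((hasDerivAt_u z₀).neg).cpow_const (c := (1 : ℂ) / 2) h).differentiableAt
  have h2 : DifferentiableAt ℂ
      (fun z => Complex.cos ((π : ℂ) * (Complex.I * ((-u z) ^ ((1 : ℂ) / 2))))) z₀ :=
    ((differentiableAt_const _).mul ((differentiableAt_const _).mul h1)).ccos
  have hfun : W = fun z => Complex.cos ((π : ℂ) * (Complex.I * ((-u z) ^ ((1 : ℂ) / 2)))) :=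
    funext W_eq_V
  rw [hfun]
  exact h2

lemma diffAt_ne {z₀ : ℂ} (h : u z₀ ≠ 0) : DifferentiableAt ℂ W z₀ := by
  by_cases hs : u z₀ ∈ Complex.slitPlane
  · exact diffAt_of_slit hs
  · apply diffAt_of_neg
    rw [Complex.mem_slitPlane_iff] at hs ⊢
    push_neg at hs
    obtain ⟨hre, him⟩ := hs
    left
    simp only [Complex.neg_re, Complex.neg_im]
    rcases lt_or_eq_of_le hre with h' | h'
    · linarith
    · exact absurd (Complex.ext (by simp [h']) (by simp [him])) h

lemma u_eq_zero {z : ℂ} (h : u z = 0) : z = Complex.I / 2 ∨ z = -(Complex.I / 2) := by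
  have h' : z ^ 2 + 1 / 4 = 0 := h
  have hfac : (z - Complex.I / 2) * (z + Complex.I / 2) = 0 := by
    linear_combination h' - (1 / 4 : ℂ) * Complex.I_sq
  rcases mul_eq_zero.1 hfac with h1 | h1
  · exact Or.inl (sub_eq_zero.mp h1)
  · exact Or.inr (eq_neg_of_add_eq_zero_left h1)

lemma contAt_W {z₀ : ℂ} (h0 : u z₀ = 0) : ContinuousAt W z₀ := by
  have hcpow : ContinuousAt (fun p : ℂ × ℂ => p.1 ^ p.2) (0, (1 : ℂ) / 2) :=
    Complex.continuousAt_cpow_zero_of_re_pos (by norm_num)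
  have hpair : ContinuousAt (fun z => (u z, (1 : ℂ) / 2)) z₀ :=
    (u_cont.continuousAt).prodMk continuousAt_const
  have hs : ContinuousAt s z₀ := by
    have ht : Tendsto (fun z => (u z, (1 : ℂ) / 2)) (𝓝 z₀) (𝓝 (0, (1 : ℂ) / 2)) := by
      rw [← h0]
      exact hpair
    have h3 := hcpow.tendsto.comp ht
    have hs0 : s z₀ = 0 := by
      rw [s, h0, Complex.zero_cpow (show (1 : ℂ) / 2 ≠ 0 by norm_num)]
    rw [ContinuousAt, hs0]
    show Tendsto (fun z => u z ^ ((1 : ℂ) / 2)) (𝓝 z₀) (𝓝 0)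
    simpa [Function.comp_def] using h3
  exact Complex.continuous_cos.continuousAt.comp (continuousAt_const.mul hs)

lemma W_diff : Differentiable ℂ W := by
  intro z₀
  by_cases h0 : u z₀ = 0
  · have hball : Metric.ball z₀ (1 / 2) ∈ 𝓝 z₀ := Metric.ball_mem_nhds _ (by norm_num)
    have hd : DifferentiableOn ℂ W (Metric.ball z₀ (1 / 2) \ {z₀}) := by
      rintro z ⟨hz1, hz2⟩
      refine (diffAt_ne ?_).differentiableWithinAt
      intro hz0
      have hz1' : ‖z - z₀‖ < 1 / 2 := by
        rw [← Complex.dist_eq]; exact Metric.mem_ball.mp hz1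
      have hz2' : z ≠ z₀ := hz2
      rcases u_eq_zero hz0 with rfl | rfl <;> rcases u_eq_zero h0 with h0' | h0' <;>
        rw [h0'] at hz1' hz2'
      · exact hz2' rfl
      · rw [show Complex.I / 2 - -(Complex.I / 2) = Complex.I by ring, Complex.norm_I] at hz1'
        norm_num at hz1'
      · rw [show -(Complex.I / 2) - Complex.I / 2 = -Complex.I by ring, norm_neg,
          Complex.norm_I] at hz1'
        norm_num at hz1'
      · exact hz2' rfl
    have hcont := contAt_W h0
    have hlim : Tendsto W (𝓝[≠] z₀) (𝓝 (W z₀)) := hcont.tendsto.mono_left nhdsWithin_le_nhds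
    have hb : IsBoundedUnder (· ≤ ·) (𝓝[≠] z₀) (norm ∘ (fun z => W z - W z₀)) :=
      ((hlim.sub tendsto_const_nhds).norm).isBoundedUnder_le
    have H := Complex.differentiableOn_update_limUnder_of_isLittleO hball hd
      hb.isLittleO_sub_self_inv
    rw [hlim.limUnder_eq, Function.update_eq_self] at H
    exact H.differentiableAt hball
  · exact diffAt_ne h0


lemma abs_quarter : ‖(1 / 4 : ℂ)‖ = 1 / 4 := by
  rw [norm_div, norm_one]
  norm_num [Complex.norm_ofNat]

lemma key_abs (p q : ℂ) : ‖q‖ - ‖p‖ ≤ ‖p + q‖ := by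
  simpa [sub_neg_eq_add, add_comm] using norm_sub_norm_le q (-p)

lemma abs_exp_mul_I (θ : ℂ) : ‖Complex.exp (θ * Complex.I)‖ = Real.exp (-θ.im) := by
  rw [Complex.norm_exp]
  congr 1
  simp [Complex.mul_re]

lemma two_abs_cos (θ : ℂ) : 2 * ‖Complex.cos θ‖ =
    ‖Complex.exp (θ * Complex.I) + Complex.exp (-θ * Complex.I)‖ := by
  rw [← Complex.two_cos, norm_mul]
  norm_num [Complex.norm_ofNat]

lemma abs_cos_le (θ : ℂ) : ‖Complex.cos θ‖ ≤ Real.exp |θ.im| := by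
  have habs := two_abs_cos θ
  have h1 := abs_exp_mul_I θ
  have h2 := abs_exp_mul_I (-θ)
  rw [Complex.neg_im, neg_neg] at h2
  have htri := norm_add_le (Complex.exp (θ * Complex.I)) (Complex.exp (-θ * Complex.I))
  rw [h1, h2] at htri
  have e1 : Real.exp (-θ.im) ≤ Real.exp |θ.im| := Real.exp_le_exp.2 (neg_le_abs _)
  have e2 : Real.exp θ.im ≤ Real.exp |θ.im| := Real.exp_le_exp.2 (le_abs_self _)
  linarith

lemma abs_cos_lower (θ : ℂ) :
    Real.exp |θ.im| - Real.exp (-|θ.im|) ≤ 2 * ‖Complex.cos θ‖ := by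
  have habs := two_abs_cos θ
  have h1 := abs_exp_mul_I θ
  have h2 := abs_exp_mul_I (-θ)
  rw [Complex.neg_im, neg_neg] at h2
  have k1 := key_abs (Complex.exp (θ * Complex.I)) (Complex.exp (-θ * Complex.I))
  have k2 := key_abs (Complex.exp (-θ * Complex.I)) (Complex.exp (θ * Complex.I))
  rw [h1, h2] at k1 k2
  rw [add_comm] at k2
  rcases abs_cases θ.im with ⟨h, _⟩ | ⟨h, _⟩
  · rw [h]
    linarith
  · rw [h]
    rw [neg_neg]
    linarith

lemma im_sq_bounds (z : ℂ) :
    (s z).im ^ 2 ≤ z.im ^ 2 ∧ z.im ^ 2 - 1 / 4 ≤ (s z).im ^ 2 := by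
  have hsum : (s z).re ^ 2 + (s z).im ^ 2 = ‖u z‖ := by
    have h : ‖u z‖ = ‖s z‖ ^ 2 := by
      rw [← norm_pow, show s z ^ 2 = u z from sq_s z]
    rw [h, Complex.sq_norm, Complex.normSq_apply]
    ring
  have hre : (s z).re ^ 2 - (s z).im ^ 2 = (u z).re := by
    have h : (s z ^ 2).re = (u z).re := by rw [show s z ^ 2 = u z from sq_s z]
    have h2 : (s z ^ 2).re = (s z).re ^ 2 - (s z).im ^ 2 := by
      rw [sq, Complex.mul_re]
      ring
    rw [← h, h2]
  have hure : (u z).re = z.re ^ 2 - z.im ^ 2 + 1 / 4 := by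
    have : (u z).re = (z ^ 2).re + (1 / 4 : ℂ).re := by
      rw [u, Complex.add_re]
    rw [this, sq, Complex.mul_re]
    norm_num
    ring
  have habsz2 : ‖z ^ 2‖ = z.re ^ 2 + z.im ^ 2 := by
    rw [norm_pow, Complex.sq_norm, Complex.normSq_apply]
    ring
  have hub : ‖u z‖ ≤ z.re ^ 2 + z.im ^ 2 + 1 / 4 := by
    calc ‖u z‖ ≤ ‖z ^ 2‖ + ‖(1 / 4 : ℂ)‖ :=
          norm_add_le _ _
      _ = z.re ^ 2 + z.im ^ 2 + 1 / 4 := by rw [habsz2, abs_quarter]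
  have hlb : z.re ^ 2 + z.im ^ 2 - 1 / 4 ≤ ‖u z‖ := by
    have h : ‖z ^ 2‖ ≤ ‖u z‖ + ‖(1 / 4 : ℂ)‖ := by
      have he : (z ^ 2 : ℂ) = u z + -(1 / 4 : ℂ) := by rw [u]; ring
      rw [he]
      calc ‖u z + -(1 / 4 : ℂ)‖ ≤ ‖u z‖ + ‖-(1 / 4 : ℂ)‖ :=
            norm_add_le _ _
        _ = ‖u z‖ + ‖(1 / 4 : ℂ)‖ := by rw [norm_neg]
    rw [habsz2, abs_quarter] at h
    linarith
  constructor <;> nlinarith [hsum, hre, hure, hub, hlb]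

lemma W_bounds (z : ℂ) (hz : 2 ≤ |z.im|) :
    Real.exp (-π) / 4 * Real.exp (π * |z.im|) ≤ ‖W z‖ ∧
    ‖W z‖ ≤ 1 * Real.exp (π * |z.im|) := by
  obtain ⟨h1, h2⟩ := im_sq_bounds z
  set b := (s z).im with hb
  set y := z.im with hy
  have hb_ub : |b| ≤ |y| := by
    nlinarith [abs_nonneg b, abs_nonneg y, _root_.sq_abs b, _root_.sq_abs y]
  have hb_lb : |y| - 1 ≤ |b| := by
    nlinarith [abs_nonneg b, abs_nonneg y, _root_.sq_abs b, _root_.sq_abs y]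
  have him : ((π : ℂ) * s z).im = π * b := by
    simp [Complex.mul_im, hb]
  have habs_im : |((π : ℂ) * s z).im| = π * |b| := by
    rw [him, abs_mul, abs_of_pos Real.pi_pos]
  have upper := abs_cos_le ((π : ℂ) * s z)
  have lower := abs_cos_lower ((π : ℂ) * s z)
  rw [habs_im] at upper lower
  have hWabs : ‖W z‖ = ‖Complex.cos ((π : ℂ) * s z)‖ := rfl
  have hpi3 : (3 : ℝ) < π := Real.pi_gt_three
  have hb1 : 1 ≤ |b| := by linarith
  constructor
  · have e3 : (2 : ℝ) ≤ Real.exp (π * |b|) := by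
      have hx : (2 : ℝ) ≤ 1 + π * |b| := by nlinarith
      linarith [Real.add_one_le_exp (π * |b|)]
    have e4 : Real.exp (-(π * |b|)) ≤ 1 :=
      Real.exp_le_one_iff.2 (neg_nonpos.2 (by positivity))
    have hcos : Real.exp (π * |b|) / 4 ≤ ‖Complex.cos ((π : ℂ) * s z)‖ := by
      linarith
    rw [hWabs]
    calc Real.exp (-π) / 4 * Real.exp (π * |y|) = Real.exp (π * |y| + -π) / 4 := by
          rw [Real.exp_add]
          ring
      _ ≤ Real.exp (π * |b|) / 4 := by
          gcongr
          nlinarith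
      _ ≤ ‖Complex.cos ((π : ℂ) * s z)‖ := hcos
  · rw [hWabs]
    rw [one_mul]
    calc ‖Complex.cos ((π : ℂ) * s z)‖ ≤ Real.exp (π * |b|) := upper
      _ ≤ Real.exp (π * |y|) := Real.exp_le_exp.2 (by nlinarith)


lemma zero_pm {z : ℂ} (h : W z = 0) :
    ∃ k : ℕ, z = ((r k : ℝ) : ℂ) ∨ z = -((r k : ℝ) : ℂ) := by
  obtain ⟨k, hk⟩ := (zeros_iff z).1 h
  refine ⟨k, ?_⟩
  have hr : ((r k : ℝ) : ℂ) ^ 2 = (k : ℂ) ^ 2 + k := by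
    rw [← Complex.ofReal_pow, r_sq]
    push_cast
    ring
  have hfac : (z - ((r k : ℝ) : ℂ)) * (z + ((r k : ℝ) : ℂ)) = 0 := by
    have he : (z - ((r k : ℝ) : ℂ)) * (z + ((r k : ℝ) : ℂ)) = z ^ 2 - ((r k : ℝ) : ℂ) ^ 2 := by
      ring
    rw [he, hk, hr, sub_self]
  rcases mul_eq_zero.1 hfac with h1 | h1
  · exact Or.inl (sub_eq_zero.mp h1)
  · exact Or.inr (eq_neg_of_add_eq_zero_left h1)

lemma pm_zero {z : ℂ} {k : ℕ} (h : z = ((r k : ℝ) : ℂ) ∨ z = -((r k : ℝ) : ℂ)) :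
    W z = 0 := by
  have hr : ((r k : ℝ) : ℂ) ^ 2 = (k : ℂ) ^ 2 + k := by
    rw [← Complex.ofReal_pow, r_sq]
    push_cast
    ring
  apply (zeros_iff z).2
  refine ⟨k, ?_⟩
  rcases h with rfl | rfl
  · exact hr
  · rw [neg_pow]
    simpa using hr

lemma W_sep {lam mu : ℂ} (hl : W lam = 0) (hm : W mu = 0) (hne : lam ≠ mu) :
    1 ≤ ‖lam - mu‖ := by
  obtain ⟨j, hj⟩ := zero_pm hl
  obtain ⟨k, hk⟩ := zero_pm hm
  obtain ⟨x, hx, rfl⟩ : ∃ x : ℝ, (x = r j ∨ x = -r j) ∧ lam = (x : ℂ) := by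
    rcases hj with rfl | rfl
    · exact ⟨r j, Or.inl rfl, rfl⟩
    · exact ⟨-r j, Or.inr rfl, by push_cast; ring⟩
  obtain ⟨y, hy, rfl⟩ : ∃ y : ℝ, (y = r k ∨ y = -r k) ∧ mu = (y : ℂ) := by
    rcases hk with rfl | rfl
    · exact ⟨r k, Or.inl rfl, rfl⟩
    · exact ⟨-r k, Or.inr rfl, by push_cast; ring⟩
  have hxy : x ≠ y := fun h => hne (by rw [h])
  calc (1 : ℝ) ≤ |x - y| := sep_real hx hy hxy
    _ = ‖((x - y : ℝ) : ℂ)‖ := by rw [Complex.norm_real, Real.norm_eq_abs]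
    _ = ‖(x : ℂ) - (y : ℂ)‖ := by push_cast; ring_nf

lemma W_sineType : IsSineType W := by
  refine ⟨W_diff, ⟨1, one_pos, ?_⟩, ⟨1, one_pos, Real.exp (-π) / 4, by positivity, 2, two_pos, ?_⟩⟩
  · intro lam hl mu hm hne
    exact W_sep hl hm hne
  · intro lam hlam
    exact W_bounds lam hlam

lemma W_realZeros : ∀ z : ℂ, W z = 0 → ∃ x : ℝ, z = (x : ℂ) := by
  intro z hz
  obtain ⟨k, hk⟩ := zero_pm hz
  rcases hk with rfl | rfl
  · exact ⟨r k, rfl⟩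
  · exact ⟨-r k, by push_cast; ring⟩

end GenAttenOne

/-- `W₁(λ) = cos(π√(λ² + 1/4))` is a generating function for attenuation at Fresnel
number `𝔣 = 1`, with zero set `{±√(k² + k) : k ∈ ℕ}`. -/
theorem generating_function_attenuation_one
    (W₁ : ℂ → ℂ)
    (hW₁ : ∀ z : ℂ, W₁ z = Complex.cos ((π : ℂ) * (z ^ 2 + 1 / 4) ^ ((1 : ℂ) / 2))) :
    -- the value is independent of the branch of the square root
    (∀ z w : ℂ, w ^ 2 = z ^ 2 + 1 / 4 → W₁ z = Complex.cos ((π : ℂ) * w)) ∧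
    -- W₁ is of sine-type
    IsSineType W₁ ∧
    -- all zeros are real
    (∀ z : ℂ, W₁ z = 0 → ∃ x : ℝ, z = (x : ℂ)) ∧
    -- the zero set is exactly {λ : λ² = k² + k for some k ∈ ℕ}
    {z : ℂ | W₁ z = 0} = {z : ℂ | ∃ k : ℕ, z ^ 2 = (k : ℂ) ^ 2 + k} ∧
    -- which is {±√(k² + k) : k ∈ ℕ}
    {z : ℂ | W₁ z = 0} =
      {z : ℂ | ∃ k : ℕ, z = (Real.sqrt ((k : ℝ) ^ 2 + k) : ℂ) ∨
        z = -(Real.sqrt ((k : ℝ) ^ 2 + k) : ℂ)} ∧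
    -- W₁ is a generating function for attenuation at 𝔣 = 1
    IsGeneratingAtten 1 W₁ := by
  have hfun : W₁ = GenAttenOne.W := funext fun z => hW₁ z
  subst hfun
  refine ⟨?_, GenAttenOne.W_sineType, GenAttenOne.W_realZeros, ?_, ?_, ?_⟩
  · intro z w h
    exact GenAttenOne.W_eq h
  · ext z
    exact GenAttenOne.zeros_iff z
  · ext z
    constructor
    · intro hz
      exact GenAttenOne.zero_pm hz
    · rintro ⟨k, hk⟩
      exact GenAttenOne.pm_zero (k := k) hk
  · refine ⟨GenAttenOne.W_sineType, GenAttenOne.W_realZeros, ?_⟩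
    intro z hz
    obtain ⟨k, hk⟩ := (GenAttenOne.zeros_iff z).1 hz
    refine ⟨(k : ℤ) ^ 2 + k, ?_⟩
    rw [hk]
    push_cast
    ring
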